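/- Cobordism of nanowords is compatible with concatenation: if v₁ is cobordant to v₂ and w₁ is cobordant to w₂, then the concatenation v₁w₁ is cobordant to v₂w₂. -/

import Mathlib

/-! Nanowords over an alphabet `α` with involution `τ`, following Turaev.
A letter is a pair (id, α-value); a nanoword is a word in which every letter id
occurs exactly twice, with a well-defined α-value. -/

/-- A letter of an `α`-alphabet: an identifier together with its projection to `α`. -/
abbrev Letter (α : Type) := ℕ × α

/-- `w` is a nanoword: each occurring letter id occurs exactly twice and determines
its `α`-value. -/
def IsNanoword {α : Type} (w : List (Letter α)) : Prop :=
  (∀ p ∈ w, (w.filter fun q => q.1 == p.1).length = 2) ∧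
  ∀ p ∈ w, ∀ q ∈ w, p.1 = q.1 → p.2 = q.2

/-- The set of letter ids occurring in a word. -/
def lettersOf {α : Type} (w : List (Letter α)) : Set ℕ := {n | ∃ a, (n, a) ∈ w}

/-- `splice [x₁,…,x_{k+1}] [v₁,…,v_k] = x₁ v₁ x₂ v₂ ⋯ x_k v_k x_{k+1}`:
the nanoword with a factor `(v₁|⋯|v_k)`. -/
def splice {α : Type} : List (List (Letter α)) → List (List (Letter α)) → List (Letter α)
  | [], _ => []
  | x :: xs, [] => x ++ splice xs []
  | x :: xs, v :: vs => x ++ v ++ splice xs vs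

/-- The nanophrase `vs = (v₁|⋯|v_k)` is symmetric: there is `ι` with `ι ∘ vᵣ = vᵣ⁻`
for all `r`, and `|ι B| = τ^{ε B} |B|` where `ε B = 0` iff both occurrences of `B`
lie in the same word of `vs`. -/
def IsSymPhrase {α : Type} (τ : α → α) (vs : List (List (Letter α))) : Prop :=
  ∃ ι : Letter α → Letter α,
    (∀ v ∈ vs, v.map ι = v.reverse) ∧
    ∀ B ∈ vs.flatten,
      ((∃ v ∈ vs, (v.filter fun q => q.1 == B.1).length = 2) → (ι B).2 = B.2) ∧
      ((¬ ∃ v ∈ vs, (v.filter fun q => q.1 == B.1).length = 2) → (ι B).2 = τ B.2)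

/-- The nanophrase is even: every constituent word has even length. -/
def IsEvenPhrase {α : Type} (vs : List (List (Letter α))) : Prop :=
  ∀ v ∈ vs, Even v.length

/-- The moves (TR): isomorphisms, the three homotopy moves, and surgeries. -/
inductive NanoMove {α : Type} (τ : α → α) : List (Letter α) → List (Letter α) → Prop
  | iso (w : List (Letter α)) (f : ℕ → ℕ) (hf : Function.Injective f)
      (hw : IsNanoword w) :
      NanoMove τ w (w.map fun p => (f p.1, p.2))
  | h1 (x y : List (Letter α)) (A : Letter α)
      (hw : IsNanoword (x ++ [A, A] ++ y)) :
      NanoMove τ (x ++ [A, A] ++ y) (x ++ y)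
  | h2 (x y z : List (Letter α)) (A B : Letter α) (hAB : B.2 = τ A.2)
      (hw : IsNanoword (x ++ [A, B] ++ y ++ [B, A] ++ z)) :
      NanoMove τ (x ++ [A, B] ++ y ++ [B, A] ++ z) (x ++ y ++ z)
  | h3 (x y z t : List (Letter α)) (A B C : Letter α)
      (hAB : A.2 = B.2) (hBC : B.2 = C.2)
      (hw : IsNanoword (x ++ [A, B] ++ y ++ [A, C] ++ z ++ [B, C] ++ t)) :
      NanoMove τ (x ++ [A, B] ++ y ++ [A, C] ++ z ++ [B, C] ++ t)
                 (x ++ [B, A] ++ y ++ [C, A] ++ z ++ [C, B] ++ t)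
  | surgery (xs vs : List (List (Letter α))) (hlen : xs.length = vs.length + 1)
      (hsym : IsSymPhrase τ vs) (heven : IsEvenPhrase vs)
      (hw : IsNanoword (splice xs vs)) :
      NanoMove τ (splice xs vs) xs.flatten

/-- Cobordism: the equivalence relation generated by the moves (TR). -/
def Cobordant {α : Type} (τ : α → α) : List (Letter α) → List (Letter α) → Prop :=
  Relation.EqvGen (NanoMove τ)

namespace NW

variable {α : Type}

/-- Pairwise-id-disjointness of two words. -/
def disjL (v w : List (Letter α)) : Prop := ∀ p ∈ v, ∀ q ∈ w, p.1 ≠ q.1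

lemma disjL_of_set {v w : List (Letter α)} (h : Disjoint (lettersOf v) (lettersOf w)) :
    disjL v w := by
  intro p hp q hq hpq
  exact Set.disjoint_left.1 h ⟨p.2, by simpa using hp⟩ ⟨q.2, by simpa [hpq] using hq⟩

lemma disjL.symm {v w : List (Letter α)} (h : disjL v w) : disjL w v :=
  fun p hp q hq => (h q hq p hp).symm

lemma disjL_nil (v : List (Letter α)) : disjL v [] := by intro p hp q hq; simp at hq

lemma disjL_nil' (v : List (Letter α)) : disjL [] v := by intro p hp; simp at hp

lemma nano_nil : IsNanoword ([] : List (Letter α)) := by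
  constructor <;> intro p hp <;> simp at hp

lemma nano_append {v w : List (Letter α)} (hv : IsNanoword v) (hw : IsNanoword w)
    (hd : disjL v w) : IsNanoword (v ++ w) := by
  constructor
  · intro p hp
    rw [List.filter_append]
    rcases List.mem_append.1 hp with h | h
    · have : w.filter (fun q => q.1 == p.1) = [] := by
        rw [List.filter_eq_nil_iff]
        intro q hq
        simpa using (hd p h q hq).symm
      simp [this, hv.1 p h]
    · have : v.filter (fun q => q.1 == p.1) = [] := by
        rw [List.filter_eq_nil_iff]
        intro q hq
        simpa using (hd q hq p h)
      simp [this, hw.1 p h]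
  · intro p hp q hq hpq
    rcases List.mem_append.1 hp with h | h <;> rcases List.mem_append.1 hq with h' | h'
    · exact hv.2 p h q h' hpq
    · exact absurd hpq (hd p h q h')
    · exact absurd hpq.symm (hd q h' p h)
    · exact hw.2 p h q h' hpq

lemma nano_rename {g : ℕ → ℕ} (hg : Function.Injective g) {w : List (Letter α)}
    (hw : IsNanoword w) : IsNanoword (w.map fun p => (g p.1, p.2)) := by
  constructor
  · rintro p hp
    obtain ⟨p₀, hp₀, rfl⟩ := List.mem_map.1 hp
    rw [List.filter_map]
    have : ∀ q ∈ w, ((fun q : Letter α => q.1 == (g p₀.1, p₀.2).1) ∘ fun p => (g p.1, p.2)) q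
        = (fun q : Letter α => q.1 == p₀.1) q := by
      intro q hq
      simp only [Function.comp]
      rw [Bool.eq_iff_iff]
      simp [hg.eq_iff]
    rw [List.filter_congr this, List.length_map]
    exact hw.1 p₀ hp₀
  · rintro p hp q hq hpq
    obtain ⟨p₀, hp₀, rfl⟩ := List.mem_map.1 hp
    obtain ⟨q₀, hq₀, rfl⟩ := List.mem_map.1 hq
    exact hw.2 p₀ hp₀ q₀ hq₀ (hg hpq)

lemma nano_perm {v w : List (Letter α)} (h : v.Perm w) (hv : IsNanoword v) :
    IsNanoword w := by
  constructor
  · intro p hp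
    rw [← (h.filter _).length_eq]
    exact hv.1 p (h.mem_iff.2 hp)
  · intro p hp q hq
    exact hv.2 p (h.mem_iff.2 hp) q (h.mem_iff.2 hq)

/-- ids of a word -/
def ids (w : List (Letter α)) : List ℕ := w.map Prod.fst

/-- max id -/
def maxId (w : List (Letter α)) : ℕ := (ids w).foldr max 0

lemma maxId_cons (a : Letter α) (l : List (Letter α)) :
    maxId (a :: l) = max a.1 (maxId l) := rfl

lemma le_maxId {w : List (Letter α)} {p : Letter α} (hp : p ∈ w) : p.1 ≤ maxId w := by
  induction w with
  | nil => simp at hp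
  | cons a l ih =>
    rw [maxId_cons]
    rcases List.mem_cons.1 hp with hp | hp
    · subst hp; omega
    · have := ih hp; omega

lemma mem_ids {w : List (Letter α)} {p : Letter α} (hp : p ∈ w) : p.1 ∈ ids w :=
  List.mem_map.2 ⟨p, hp, rfl⟩

lemma of_mem_ids {w : List (Letter α)} {n : ℕ} (hn : n ∈ ids w) :
    ∃ p ∈ w, p.1 = n := List.mem_map.1 hn

lemma inj_glue {f : ℕ → ℕ} {A B : List ℕ} {M : ℕ}
    (hf : ∀ n₁ ∈ A, ∀ n₂ ∈ A, f n₁ = f n₂ → n₁ = n₂)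
    (hfB : ∀ n ∈ A, f n ∉ B) (hfM : ∀ n ∈ A, f n < M) (hBM : ∀ n ∈ B, n < M) :
    Function.Injective (fun n => if n ∈ A then f n else if n ∈ B then n else n + M) := by
  intro n₁ n₂ h
  simp only at h
  by_cases h1 : n₁ ∈ A <;> by_cases h2 : n₂ ∈ A <;>
    by_cases h3 : n₁ ∈ B <;> by_cases h4 : n₂ ∈ B <;>
    simp only [h1, h2, h3, h4, if_true, if_false, if_pos, if_neg, not_false_iff] at h <;>
    first
    | (exact hf _ h1 _ h2 h)
    | (have := hfM _ h1; omega)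
    | (have := hfM _ h2; omega)
    | (have := hBM _ h3; omega)
    | (have := hBM _ h4; omega)
    | (exact (hfB _ h1 (by rwa [h])).elim)
    | (exact (hfB _ h2 (by rwa [← h])).elim)
    | omega
    | exact h

lemma inj_shiftExcept {A : List ℕ} {M : ℕ} (hA : ∀ n ∈ A, n < M) :
    Function.Injective (fun n => if n ∈ A then n else n + M) := by
  intro n₁ n₂ h
  simp only at h
  split_ifs at h with h1 h2 h3
  · exact h
  · have := hA _ h1; omega
  · have := hA _ h3; omega
  · omega


lemma disjL.append_left {x y z : List (Letter α)} (h1 : disjL x z) (h2 : disjL y z) :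
    disjL (x ++ y) z := by
  intro p hp q hq
  rcases List.mem_append.1 hp with h | h
  · exact h1 p h q hq
  · exact h2 p h q hq

lemma disjL.append_right {x y z : List (Letter α)} (h1 : disjL x y) (h2 : disjL x z) :
    disjL x (y ++ z) := by
  intro p hp q hq
  rcases List.mem_append.1 hq with h | h
  · exact h1 p hp q h
  · exact h2 p hp q h

lemma not_mem_ids_of_disjL {u a : List (Letter α)} {p : Letter α}
    (d : disjL u a) (hp : p ∈ u) : p.1 ∉ ids a := by
  intro h
  obtain ⟨q, hq, e⟩ := of_mem_ids h
  exact d p hp q hq e.symm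

lemma splice_cons_append (u x : List (Letter α)) (xs vs : List (List (Letter α))) :
    splice ((u ++ x) :: xs) vs = u ++ splice (x :: xs) vs := by
  cases vs <;> simp [splice]

lemma splice_append_single (w : List (Letter α)) :
    ∀ (vs xs : List (List (Letter α))), xs.length = vs.length + 1 →
      splice (xs ++ [w]) (vs ++ [[]]) = splice xs vs ++ w := by
  intro vs
  induction vs with
  | nil =>
    intro xs h
    match xs, h with
    | [x], _ => simp [splice]
  | cons v vt ih =>
    intro xs h
    match xs, h with
    | x :: xt, h =>
      have h' : xt.length = vt.length + 1 := by simpa using h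
      simp [splice, ih xt h']

lemma move_append {τ : α → α} {a b : List (Letter α)} (m : NanoMove τ a b)
    (u w : List (Letter α)) (hu : IsNanoword u) (hw : IsNanoword w)
    (duw : disjL u w) (dua : disjL u a) (dwa : disjL w a)
    (dub : disjL u b) (dwb : disjL w b) :
    NanoMove τ (u ++ a ++ w) (u ++ b ++ w) := by
  cases m with
  | iso _ f hf hw0 =>
    have hna : IsNanoword (u ++ a ++ w) :=
      nano_append (nano_append hu hw0 dua) hw (disjL.append_left duw (dwa.symm))
    set b' := a.map (fun p : Letter α => (f p.1, p.2)) with hb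
    set M := maxId u + maxId w + maxId b' + 1 with hM
    have hfb : ∀ n ∈ ids a, f n ∈ ids b' := by
      intro n hn
      obtain ⟨p, hp, rfl⟩ := of_mem_ids hn
      exact mem_ids (List.mem_map.2 ⟨p, hp, rfl⟩)
    set g := fun n => if n ∈ ids a then f n else if n ∈ ids u ++ ids w then n else n + M
      with hg
    have ginj : Function.Injective g := by
      apply inj_glue
      · intro n₁ _ n₂ _ h; exact hf h
      · intro n hn hmem
        obtain ⟨q, hq, e⟩ := of_mem_ids (hfb n hn)
        rcases List.mem_append.1 hmem with h | h
        · obtain ⟨p, hp, e'⟩ := of_mem_ids h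
          exact dub p hp q hq (by omega)
        · obtain ⟨p, hp, e'⟩ := of_mem_ids h
          exact dwb p hp q hq (by omega)
      · intro n hn
        obtain ⟨q, hq, e⟩ := of_mem_ids (hfb n hn)
        have := le_maxId hq
        omega
      · intro n hn
        rcases List.mem_append.1 hn with h | h <;>
          obtain ⟨p, hp, e⟩ := of_mem_ids h <;> have := le_maxId hp <;> omega
    have mv := NanoMove.iso (τ := τ) (u ++ a ++ w) g ginj hna
    have e : (u ++ a ++ w).map (fun p : Letter α => (g p.1, p.2)) = u ++ b' ++ w := by
      simp only [List.map_append]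
      congr 1
      congr 1
      · refine (List.map_congr_left ?_).trans (List.map_id u)
        intro p hp
        have h1 : p.1 ∉ ids a := not_mem_ids_of_disjL dua hp
        have h2 : p.1 ∈ ids u ++ ids w := List.mem_append.2 (Or.inl (mem_ids hp))
        simp only [hg, if_neg h1, if_pos h2, id]
      · refine List.map_congr_left ?_
        intro p hp
        simp only [hg, if_pos (mem_ids hp)]
      · refine (List.map_congr_left ?_).trans (List.map_id w)
        intro p hp
        have h1 : p.1 ∉ ids a := not_mem_ids_of_disjL dwa hp
        have h2 : p.1 ∈ ids u ++ ids w := List.mem_append.2 (Or.inr (mem_ids hp))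
        simp only [hg, if_neg h1, if_pos h2, id]
    rwa [e] at mv
  | h1 x y A hw0 =>
    have hna : IsNanoword (u ++ (x ++ [A, A] ++ y) ++ w) :=
      nano_append (nano_append hu hw0 dua) hw (disjL.append_left duw (dwa.symm))
    have hw' : IsNanoword ((u ++ x) ++ [A, A] ++ (y ++ w)) := by
      simpa [List.append_assoc] using hna
    have mv := NanoMove.h1 (τ := τ) (u ++ x) (y ++ w) A hw'
    simpa [List.append_assoc] using mv
  | h2 x y z A B hAB hw0 =>
    have hna : IsNanoword (u ++ (x ++ [A, B] ++ y ++ [B, A] ++ z) ++ w) :=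
      nano_append (nano_append hu hw0 dua) hw (disjL.append_left duw (dwa.symm))
    have hw' : IsNanoword ((u ++ x) ++ [A, B] ++ y ++ [B, A] ++ (z ++ w)) := by
      simpa [List.append_assoc] using hna
    have mv := NanoMove.h2 (τ := τ) (u ++ x) y (z ++ w) A B hAB hw'
    simpa [List.append_assoc] using mv
  | h3 x y z t A B C hAB hBC hw0 =>
    have hna : IsNanoword (u ++ (x ++ [A, B] ++ y ++ [A, C] ++ z ++ [B, C] ++ t) ++ w) :=
      nano_append (nano_append hu hw0 dua) hw (disjL.append_left duw (dwa.symm))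
    have hw' : IsNanoword ((u ++ x) ++ [A, B] ++ y ++ [A, C] ++ z ++ [B, C] ++ (t ++ w)) := by
      simpa [List.append_assoc] using hna
    have mv := NanoMove.h3 (τ := τ) (u ++ x) y z (t ++ w) A B C hAB hBC hw'
    simpa [List.append_assoc] using mv
  | surgery xs vs hlen hsym heven hw0 =>
    match xs, hlen with
    | x0 :: xt, hlen =>
    have hlen0 : xt.length = vs.length := by simpa using hlen
    set xs' : List (List (Letter α)) := (u ++ x0) :: (xt ++ [w]) with hxs'
    set vs' : List (List (Letter α)) := vs ++ [[]] with hvs'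
    have hlen' : xs'.length = vs'.length + 1 := by
      simp [hxs', hvs', hlen0]
    have hsym' : IsSymPhrase τ vs' := by
      obtain ⟨ι, hι1, hι2⟩ := hsym
      refine ⟨ι, ?_, ?_⟩
      · intro v hv
        rcases List.mem_append.1 hv with h | h
        · exact hι1 v h
        · simp only [List.mem_singleton] at h
          subst h; simp
      · intro B hB
        have hB' : B ∈ vs.flatten := by
          simpa [hvs'] using hB
        have key : (∃ v ∈ vs', (v.filter fun q => q.1 == B.1).length = 2) ↔
            (∃ v ∈ vs, (v.filter fun q => q.1 == B.1).length = 2) := by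
          constructor
          · rintro ⟨v, hv, h2⟩
            rcases List.mem_append.1 hv with h | h
            · exact ⟨v, h, h2⟩
            · simp only [List.mem_singleton] at h
              subst h; simp at h2
          · rintro ⟨v, hv, h2⟩
            exact ⟨v, List.mem_append.2 (Or.inl hv), h2⟩
        exact ⟨fun hE => (hι2 B hB').1 (key.1 hE),
               fun hE => (hι2 B hB').2 (fun c => hE (key.2 c))⟩
    have heven' : IsEvenPhrase vs' := by
      intro v hv
      rcases List.mem_append.1 hv with h | h
      · exact heven v h
      · simp only [List.mem_singleton] at h
        subst h; simp
    have hsplice : splice xs' vs' = u ++ (splice (x0 :: xt) vs ++ w) := by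
      rw [hxs', hvs', splice_cons_append]
      congr 1
      rw [show x0 :: (xt ++ [w]) = (x0 :: xt) ++ [w] from rfl]
      exact splice_append_single w vs (x0 :: xt) hlen
    have hw' : IsNanoword (splice xs' vs') := by
      rw [hsplice]
      exact nano_append hu (nano_append hw0 hw dwa.symm) (dua.append_right duw)
    have mv := NanoMove.surgery (τ := τ) xs' vs' hlen' hsym' heven' hw'
    rw [hsplice] at mv
    simpa [List.append_assoc, List.flatten_append, hxs'] using mv


/-- Symmetrized single move. -/
def SM (τ : α → α) (x y : List (Letter α)) : Prop := NanoMove τ x y ∨ NanoMove τ y x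

lemma cob_symmChain {τ : α → α} {a b : List (Letter α)} (h : Cobordant τ a b) :
    Relation.ReflTransGen (SM τ) a b := by
  induction h with
  | rel x y hxy => exact Relation.ReflTransGen.single (Or.inl hxy)
  | refl x => exact Relation.ReflTransGen.refl
  | symm x y _ ih =>
    haveI : Std.Symm (SM τ) := ⟨fun x y h => Or.symm h⟩
    exact Std.Symm.symm _ _ ih
  | trans x y z _ _ ih1 ih2 => exact ih1.trans ih2

lemma chain_append {τ : α → α} (u w : List (Letter α)) (hu : IsNanoword u)
    (hw : IsNanoword w) (duw : disjL u w) :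
    ∀ (l : List (List (Letter α))) (a : List (Letter α)),
      List.Chain (SM τ) a l →
      (∀ c ∈ a :: l, disjL u c) → (∀ c ∈ a :: l, disjL w c) →
      Cobordant τ (u ++ a ++ w) (u ++ (a :: l).getLast (List.cons_ne_nil a l) ++ w) := by
  intro l
  induction l with
  | nil =>
    intro a _ _ _
    simpa [Cobordant] using Relation.EqvGen.refl (r := NanoMove τ) (u ++ a ++ w)
  | cons c l ih =>
    intro a hchain hdu hdw
    simp only [List.Chain, List.chain_cons] at hchain
    have step : Cobordant τ (u ++ a ++ w) (u ++ c ++ w) := by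
      rcases hchain.1 with m | m
      · exact Relation.EqvGen.rel _ _ (move_append m u w hu hw duw (hdu a (by simp))
          (hdw a (by simp)) (hdu c (by simp)) (hdw c (by simp)))
      · exact Relation.EqvGen.symm _ _ (Relation.EqvGen.rel _ _
          (move_append m u w hu hw duw (hdu c (by simp)) (hdw c (by simp))
            (hdu a (by simp)) (hdw a (by simp))))
    have rest := ih c hchain.2 (fun d hd => hdu d (List.mem_cons_of_mem a hd))
      (fun d hd => hdw d (List.mem_cons_of_mem a hd))
    rw [List.getLast_cons_cons]
    exact Relation.EqvGen.trans _ _ _ step rest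

lemma core {τ : α → α} {a b u w : List (Letter α)} (h : Cobordant τ a b)
    (ha : IsNanoword a) (hb : IsNanoword b) (hu : IsNanoword u) (hw : IsNanoword w)
    (duw : disjL u w) (dua : disjL u a) (dub : disjL u b)
    (dwa : disjL w a) (dwb : disjL w b) :
    Cobordant τ (u ++ a ++ w) (u ++ b ++ w) := by
  obtain ⟨l, hchain, hlast⟩ := List.exists_isChain_cons_of_relationReflTransGen (cob_symmChain h)
  have hbmem : b ∈ a :: l := hlast ▸ List.getLast_mem (List.cons_ne_nil a l)
  set M := maxId ((a :: l).flatten) + 1 with hM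
  have hMc : ∀ c ∈ a :: l, ∀ p ∈ c, p.1 < M := by
    intro c hc p hp
    have h1 : p ∈ (a :: l).flatten := List.mem_flatten.2 ⟨c, hc, hp⟩
    have := le_maxId h1
    omega
  have shiftInj : Function.Injective (fun n : ℕ => n + M) := fun x y h => by
    simp only [] at h
    omega
  have hu'n : IsNanoword (u.map (fun p : Letter α => (p.1 + M, p.2))) := nano_rename shiftInj hu
  have hw'n : IsNanoword (w.map (fun p : Letter α => (p.1 + M, p.2))) := nano_rename shiftInj hw
  have du'w' : disjL (u.map (fun p : Letter α => (p.1 + M, p.2)))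
      (w.map (fun p : Letter α => (p.1 + M, p.2))) := by
    intro p hp q hq
    obtain ⟨p₀, hp₀, rfl⟩ := List.mem_map.1 hp
    obtain ⟨q₀, hq₀, rfl⟩ := List.mem_map.1 hq
    have := duw p₀ hp₀ q₀ hq₀
    simp only
    omega
  have hfresh : ∀ (v : List (Letter α)), ∀ c ∈ a :: l,
      disjL (v.map (fun p : Letter α => (p.1 + M, p.2))) c := by
    intro v c hc p hp q hq
    obtain ⟨p₀, hp₀, rfl⟩ := List.mem_map.1 hp
    have := hMc c hc q hq
    simp only
    omega
  have main := chain_append (τ := τ) (u.map (fun p : Letter α => (p.1 + M, p.2)))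
    (w.map (fun p : Letter α => (p.1 + M, p.2))) hu'n hw'n du'w' l a hchain
    (hfresh u) (hfresh w)
  rw [hlast] at main
  -- iso u ++ a ++ w  →  u' ++ a ++ w'
  have isoAt : ∀ (c : List (Letter α)), IsNanoword c → c ∈ a :: l →
      disjL u c → disjL w c →
      NanoMove τ (u ++ c ++ w)
        ((u.map (fun p : Letter α => (p.1 + M, p.2))) ++ c ++
          (w.map (fun p : Letter α => (p.1 + M, p.2)))) := by
    intro c hcn hcl duc dwc
    have hcM : ∀ n ∈ ids c, n < M := by
      intro n hn
      obtain ⟨p, hp, rfl⟩ := of_mem_ids hn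
      exact hMc c hcl p hp
    have ginj := inj_shiftExcept (A := ids c) (M := M) hcM
    have hnuw : IsNanoword (u ++ c ++ w) :=
      nano_append (nano_append hu hcn duc) hw (disjL.append_left duw dwc.symm)
    have mv := NanoMove.iso (τ := τ) (u ++ c ++ w)
      (fun n => if n ∈ ids c then n else n + M) ginj hnuw
    have e : (u ++ c ++ w).map
        (fun p : Letter α => ((if p.1 ∈ ids c then p.1 else p.1 + M), p.2)) =
        (u.map (fun p : Letter α => (p.1 + M, p.2))) ++ c ++
          (w.map (fun p : Letter α => (p.1 + M, p.2))) := by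
      simp only [List.map_append]
      congr 1
      congr 1
      · refine List.map_congr_left ?_
        intro p hp
        rw [if_neg (not_mem_ids_of_disjL duc hp)]
      · refine (List.map_congr_left ?_).trans (List.map_id c)
        intro p hp
        rw [if_pos (mem_ids hp)]
        simp
      · refine List.map_congr_left ?_
        intro p hp
        rw [if_neg (not_mem_ids_of_disjL dwc hp)]
    rwa [e] at mv
  have mv1 := isoAt a ha (by simp) dua dwa
  have mv2 := isoAt b hb hbmem dub dwb
  exact Relation.EqvGen.trans _ _ _ (Relation.EqvGen.rel _ _ mv1)
    (Relation.EqvGen.trans _ _ _ main (Relation.EqvGen.symm _ _ (Relation.EqvGen.rel _ _ mv2)))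

end NW

open NW

/-- Cobordism is compatible with concatenation. -/
theorem cobordant_append {α : Type} (τ : α → α)
    (v₁ v₂ w₁ w₂ : List (Letter α))
    (hv₁ : IsNanoword v₁) (hv₂ : IsNanoword v₂)
    (hw₁ : IsNanoword w₁) (hw₂ : IsNanoword w₂)
    (hd₁ : Disjoint (lettersOf v₁) (lettersOf w₁))
    (hd₂ : Disjoint (lettersOf v₂) (lettersOf w₂))
    (h : Cobordant τ v₁ v₂) (h' : Cobordant τ w₁ w₂) :
    Cobordant τ (v₁ ++ w₁) (v₂ ++ w₂) := by
  have dv1w1 : disjL v₁ w₁ := disjL_of_set hd₁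
  have dv2w2 : disjL v₂ w₂ := disjL_of_set hd₂
  set M₀ := maxId v₁ + maxId v₂ + maxId w₁ + maxId w₂ + 1 with hM₀
  have shiftInj : Function.Injective (fun n : ℕ => n + M₀) := fun x y hxy => by
    simp only [] at hxy
    omega
  have hw₁'n : IsNanoword (w₁.map (fun p : Letter α => (p.1 + M₀, p.2))) :=
    nano_rename shiftInj hw₁
  have fresh1 : disjL (w₁.map (fun p : Letter α => (p.1 + M₀, p.2))) v₁ := by
    intro p hp q hq
    obtain ⟨p₀, hp₀, rfl⟩ := List.mem_map.1 hp
    have := le_maxId hq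
    simp only
    omega
  have fresh2 : disjL (w₁.map (fun p : Letter α => (p.1 + M₀, p.2))) v₂ := by
    intro p hp q hq
    obtain ⟨p₀, hp₀, rfl⟩ := List.mem_map.1 hp
    have := le_maxId hq
    simp only
    omega
  -- Step 1 : v₁ ++ w₁ ~ v₁ ++ w₁'
  have c1 : Cobordant τ (v₁ ++ w₁) (v₁ ++ w₁.map (fun p : Letter α => (p.1 + M₀, p.2))) := by
    have hv1M : ∀ n ∈ ids v₁, n < M₀ := by
      intro n hn
      obtain ⟨p, hp, rfl⟩ := of_mem_ids hn
      have := le_maxId hp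
      omega
    have ginj := inj_shiftExcept (A := ids v₁) (M := M₀) hv1M
    have hn : IsNanoword (v₁ ++ w₁) := nano_append hv₁ hw₁ dv1w1
    have mv := NanoMove.iso (τ := τ) (v₁ ++ w₁)
      (fun n => if n ∈ ids v₁ then n else n + M₀) ginj hn
    have e : (v₁ ++ w₁).map
        (fun p : Letter α => ((if p.1 ∈ ids v₁ then p.1 else p.1 + M₀), p.2)) =
        v₁ ++ w₁.map (fun p : Letter α => (p.1 + M₀, p.2)) := by
      rw [List.map_append]
      congr 1
      · refine (List.map_congr_left ?_).trans (List.map_id v₁)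
        intro p hp
        rw [if_pos (mem_ids hp)]
        simp
      · refine List.map_congr_left ?_
        intro p hp
        rw [if_neg (not_mem_ids_of_disjL dv1w1.symm hp)]
    rw [e] at mv
    exact Relation.EqvGen.rel _ _ mv
  -- Step 2 : v₁ ++ w₁' ~ v₂ ++ w₁'
  have c2 : Cobordant τ (v₁ ++ w₁.map (fun p : Letter α => (p.1 + M₀, p.2)))
      (v₂ ++ w₁.map (fun p : Letter α => (p.1 + M₀, p.2))) := by
    have := core (u := []) h hv₁ hv₂ nano_nil hw₁'n
      (disjL_nil' _) (disjL_nil' _) (disjL_nil' _) fresh1 fresh2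
    simpa using this
  -- Step 3 : w₁' ~ w₂
  have c3 : Cobordant τ (w₁.map (fun p : Letter α => (p.1 + M₀, p.2))) w₂ := by
    have mvr := NanoMove.iso (τ := τ) w₁ (fun n => n + M₀) shiftInj hw₁
    exact Relation.EqvGen.trans _ _ _
      (Relation.EqvGen.symm _ _ (Relation.EqvGen.rel _ _ mvr)) h'
  -- Step 4 : v₂ ++ w₁' ~ v₂ ++ w₂
  have c4 : Cobordant τ (v₂ ++ w₁.map (fun p : Letter α => (p.1 + M₀, p.2)))
      (v₂ ++ w₂) := by
    have := core (w := []) c3 hw₁'n hw₂ hv₂ nano_nil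
      (disjL_nil v₂) fresh2.symm dv2w2 (disjL_nil' _) (disjL_nil' _)
    simpa using this
  exact Relation.EqvGen.trans _ _ _ c1 (Relation.EqvGen.trans _ _ _ c2 c4)
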